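/- arXiv:math/0404484 — 3 statements merged into one kernel-verified Lean document; each statement's English description precedes it below -/
import Mathlib

section
/- Let O be a complete discrete valuation ring of mixed characteristic (0,p), with uniformizer π and residue field k, let a, c ∈ O with c a unit, let u ∈ Zp be a unit, and n ≥ 0 an integer. Then the power series E(T) = 1 − a(1+T)^{u pⁿ} + c(1+T)^{2u pⁿ} ∈ O[[T]] has unit content: some coefficient of E is a unit of O. -/
/-- The `p`-adic binomial coefficient `(x choose m)` for `x ∈ ℤ_p`, defined via the usual
formula `x(x-1)⋯(x-m+1)/m!` computed in `ℚ_p` (it lies in `ℤ_p` by continuity). -/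
noncomputable def PadicInt.choose {p : ℕ} [Fact p.Prime] (x : ℤ_[p]) (m : ℕ) : ℤ_[p] :=
  if h : ‖(∏ i ∈ Finset.range m, ((x : ℚ_[p]) - (i : ℚ_[p]))) / (m.factorial : ℚ_[p])‖ ≤ 1
  then ⟨_, h⟩ else 0

/-- The `p`-adic binomial power series `(1+T)^x = Σ_m (x choose m) Tᵐ ∈ ℤ_p⟦T⟧`. -/
noncomputable def PadicInt.onePlusTPow {p : ℕ} [Fact p.Prime] (x : ℤ_[p]) :
    PowerSeries ℤ_[p] :=
  PowerSeries.mk fun m => PadicInt.choose x m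


open Finset Polynomial

section EulerAux
variable {p : ℕ} [Fact p.Prime]

noncomputable def Fq (p : ℕ) [Fact p.Prime] (m : ℕ) (x : ℤ_[p]) : ℚ_[p] :=
  (∏ i ∈ Finset.range m, ((x : ℚ_[p]) - (i : ℚ_[p]))) / (m.factorial : ℚ_[p])

lemma continuous_Fq (m : ℕ) : Continuous (Fq p m) := by
  apply Continuous.div_const
  exact continuous_finset_prod _ fun i _ =>
    (continuous_subtype_val).sub continuous_const

lemma descPochhammer_eval_prod (R : Type*) [CommRing R] (k : ℕ) (r : R) :
    (descPochhammer R k).eval r = ∏ i ∈ Finset.range k, (r - i) := by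
  induction k with
  | zero => simp
  | succ k ih =>
      rw [descPochhammer_succ_right, Polynomial.eval_mul, ih, Finset.prod_range_succ]
      simp

lemma Fq_natCast (m j : ℕ) : Fq p m ((j : ℕ) : ℤ_[p]) = (j.choose m : ℚ_[p]) := by
  unfold Fq
  rw [← descPochhammer_eval_prod ℚ_[p] m]
  rw [show (((j : ℤ_[p]) : ℚ_[p])) = ((j : ℚ_[p])) from by push_cast; ring]
  rw [descPochhammer_eval_eq_descFactorial ℚ_[p] j m,
    Nat.descFactorial_eq_factorial_mul_choose]
  push_cast
  rw [mul_comm, mul_div_assoc, div_self, mul_one]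
  exact_mod_cast (Nat.factorial_ne_zero m)

lemma norm_Fq_le (m : ℕ) (x : ℤ_[p]) : ‖Fq p m x‖ ≤ 1 := by
  have hcl : IsClosed {x : ℤ_[p] | ‖Fq p m x‖ ≤ 1} :=
    isClosed_le ((continuous_Fq m).norm) continuous_const
  have hsub : Set.range ((↑) : ℕ → ℤ_[p]) ⊆ {x : ℤ_[p] | ‖Fq p m x‖ ≤ 1} := by
    rintro _ ⟨j, rfl⟩
    simp only [Set.mem_setOf_eq, Fq_natCast]
    rw [show ((j.choose m : ℚ_[p])) = (((j.choose m : ℤ_[p])) : ℚ_[p]) from by push_cast; ring]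
    exact PadicInt.norm_le_one _
  have := PadicInt.denseRange_natCast (p := p)
  have h2 : closure (Set.range ((↑) : ℕ → ℤ_[p])) ⊆ {x : ℤ_[p] | ‖Fq p m x‖ ≤ 1} :=
    closure_minimal hsub hcl
  rw [this.closure_eq] at h2
  exact h2 (Set.mem_univ x)

lemma choose_coe (x : ℤ_[p]) (m : ℕ) :
    ((PadicInt.choose x m : ℤ_[p]) : ℚ_[p]) = Fq p m x := by
  unfold PadicInt.choose
  erw [dif_pos (norm_Fq_le m x)]
  rfl

lemma choose_natCast (j m : ℕ) :
    PadicInt.choose ((j : ℕ) : ℤ_[p]) m = (j.choose m : ℤ_[p]) := by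
  apply Subtype.coe_injective
  show ((PadicInt.choose ((j : ℕ) : ℤ_[p]) m : ℤ_[p]) : ℚ_[p]) = ((j.choose m : ℤ_[p]) : ℚ_[p])
  rw [choose_coe, Fq_natCast]
  push_cast
  rfl

lemma lucas_zmod (m k n : ℕ) :
    ((m * p ^ n).choose (k * p ^ n) : ZMod p) = (m.choose k : ZMod p) := by
  have hq : 0 < p ^ n := pow_pos (Fact.out : p.Prime).pos n
  have hfrob : (frobenius (ZMod p) p) ^ n = RingHom.id (ZMod p) := by
    rw [ZMod.frobenius_zmod, ← RingHom.one_def, one_pow]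
  have h1 := Polynomial.map_iterateFrobenius_expand (R := ZMod p) (p := p) ((1 + Polynomial.X : Polynomial (ZMod p))) n
  rw [show iterateFrobenius (ZMod p) p n = RingHom.id (ZMod p) from Subsingleton.elim _ _, Polynomial.map_id] at h1
  have h2 : ((1 + Polynomial.X : Polynomial (ZMod p)) ^ (m * p ^ n)).coeff (k * p ^ n)
      = ((1 + Polynomial.X : Polynomial (ZMod p)) ^ m).coeff k := by
    rw [mul_comm m (p ^ n), pow_mul, ← h1, ← map_pow, mul_comm k (p ^ n),
      Polynomial.coeff_expand_mul' hq]
  rwa [Polynomial.coeff_one_add_X_pow, Polynomial.coeff_one_add_X_pow] at h2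

lemma choose_congr (k n : ℕ) (x : ℤ_[p]) :
    (p : ℤ_[p]) ∣ (PadicInt.choose (x * (p : ℤ_[p]) ^ n) (k * p ^ n) - PadicInt.choose x k) := by
  have hiff : ∀ z : ℤ_[p], ((p : ℤ_[p]) ∣ z) ↔ ‖z‖ ≤ ((p : ℝ)) ^ (-1 : ℤ) := by
    intro z
    rw [← PadicInt.norm_lt_one_iff_dvd, PadicInt.norm_le_pow_iff_norm_lt_pow_add_one]
    norm_num
  rw [hiff]
  set g : ℤ_[p] → ℤ_[p] := fun x =>
    PadicInt.choose (x * (p : ℤ_[p]) ^ n) (k * p ^ n) - PadicInt.choose x k with hg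
  have hnorm : ∀ x, ‖g x‖ = ‖Fq p (k * p ^ n) (x * (p : ℤ_[p]) ^ n) - Fq p k x‖ := by
    intro x
    rw [PadicInt.norm_def]
    congr 1
    push_cast [hg, choose_coe]
    ring
  have hcl : IsClosed {x : ℤ_[p] | ‖g x‖ ≤ ((p : ℝ)) ^ (-1 : ℤ)} := by
    simp only [hnorm]
    exact isClosed_le (Continuous.norm (Continuous.sub
      ((continuous_Fq (k * p ^ n)).comp (continuous_id.mul continuous_const))
      (continuous_Fq k))) continuous_const
  have hsub : Set.range ((↑) : ℕ → ℤ_[p]) ⊆ {x : ℤ_[p] | ‖g x‖ ≤ ((p : ℝ)) ^ (-1 : ℤ)} := by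
    rintro _ ⟨j, rfl⟩
    simp only [Set.mem_setOf_eq]
    rw [← hiff]
    have harg : ((j : ℤ_[p]) * (p : ℤ_[p]) ^ n) = (((j * p ^ n : ℕ)) : ℤ_[p]) := by push_cast; ring
    rw [hg]
    simp only [harg, choose_natCast]
    have hz : ((p : ℤ) ∣ ((j * p ^ n).choose (k * p ^ n) : ℤ) - (j.choose k : ℤ)) := by
      have h0 := lucas_zmod (p := p) j k n
      have h2 := ((ZMod.natCast_eq_natCast_iff _ _ _).mp h0).symm
      exact_mod_cast h2.dvd
    obtain ⟨t, ht⟩ := hz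
    exact ⟨(t : ℤ_[p]), by exact_mod_cast congrArg (fun z : ℤ => (z : ℤ_[p])) ht⟩
  have h2 : closure (Set.range ((↑) : ℕ → ℤ_[p])) ⊆ {x : ℤ_[p] | ‖g x‖ ≤ ((p : ℝ)) ^ (-1 : ℤ)} :=
    closure_minimal hsub hcl
  rw [(PadicInt.denseRange_natCast).closure_eq] at h2
  exact h2 (Set.mem_univ x)

lemma choose_one' (x : ℤ_[p]) : PadicInt.choose x 1 = x := by
  apply Subtype.coe_injective
  show ((PadicInt.choose x 1 : ℤ_[p]) : ℚ_[p]) = (x : ℚ_[p])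
  rw [choose_coe]
  simp [Fq]

lemma two_mul_choose_two (x : ℤ_[p]) : 2 * PadicInt.choose x 2 = x * (x - 1) := by
  apply Subtype.coe_injective
  show ((2 * PadicInt.choose x 2 : ℤ_[p]) : ℚ_[p]) = ((x * (x - 1) : ℤ_[p]) : ℚ_[p])
  push_cast [choose_coe]
  simp [Fq, Finset.prod_range_succ, Nat.factorial]
  field_simp
  have h22 : ((2 : ℤ_[p]) : ℚ_[p]) = 2 := rfl
  rw [h22]
  ring

lemma choose_two_double (x : ℤ_[p]) : PadicInt.choose (2 * x) 2 = x * (2 * x - 1) := by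
  apply Subtype.coe_injective
  show ((PadicInt.choose (2 * x) 2 : ℤ_[p]) : ℚ_[p]) = ((x * (2 * x - 1) : ℤ_[p]) : ℚ_[p])
  push_cast [choose_coe]
  simp [Fq, Finset.prod_range_succ, Nat.factorial]
  field_simp
  have h22 : ((2 : ℤ_[p]) : ℚ_[p]) = 2 := rfl
  rw [h22]
  ring


end EulerAux

/-- Let `O` be a complete discrete valuation ring of mixed characteristic `(0, p)`,
`a, c ∈ O` with `c` a unit, `u ∈ ℤ_pˣ` and `n ≥ 0`.  Then
`E(T) = 1 − a(1+T)^{u pⁿ} + c(1+T)^{2 u pⁿ}` has unit content: some coefficient of `E`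
is a unit of `O`. -/
theorem euler_factor_unit_content {p : ℕ} [Fact p.Prime]
    {O : Type*} [CommRing O] [IsDomain O] [IsDiscreteValuationRing O]
    [IsAdicComplete (IsLocalRing.maximalIdeal O) O] [MixedCharZero O p]
    [Algebra ℤ_[p] O]
    (a c : O) (hc : IsUnit c) (u : ℤ_[p]ˣ) (n : ℕ) :
    ∃ m, IsUnit (PowerSeries.coeff (R := O) m
      (1 - PowerSeries.C (R := O) a *
          PowerSeries.map (algebraMap ℤ_[p] O)
            (PadicInt.onePlusTPow ((u : ℤ_[p]) * (p : ℤ_[p]) ^ n))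
        + PowerSeries.C (R := O) c *
          PowerSeries.map (algebraMap ℤ_[p] O)
            (PadicInt.onePlusTPow (2 * (u : ℤ_[p]) * (p : ℤ_[p]) ^ n)))) := by
  by_contra hcon
  push_neg at hcon
  set φ := algebraMap ℤ_[p] O with hφ
  set r := IsLocalRing.residue O with hr
  set ψ := r.comp φ with hψdef
  have hres : ∀ m, r ((PowerSeries.coeff (R := O) m)
      (1 - PowerSeries.C (R := O) a * PowerSeries.map φ
          (PadicInt.onePlusTPow ((u : ℤ_[p]) * (p : ℤ_[p]) ^ n))
        + PowerSeries.C (R := O) c * PowerSeries.map φ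
          (PadicInt.onePlusTPow (2 * (u : ℤ_[p]) * (p : ℤ_[p]) ^ n)))) = 0 := fun m =>
    Ideal.Quotient.eq_zero_iff_mem.mpr ((IsLocalRing.mem_maximalIdeal _).mpr (hcon m))
  have hp0 : ψ ((p : ℤ_[p])) = 0 := by
    obtain ⟨I, hI, hchar⟩ := MixedCharZero.charP_quotient (R := O) (p := p)
    have hpI : ((p : O)) ∈ I := by
      have h0 : ((p : O ⧸ I)) = 0 := CharP.cast_eq_zero _ p
      rwa [← map_natCast (Ideal.Quotient.mk I), Ideal.Quotient.eq_zero_iff_mem] at h0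
    have hpm : (p : O) ∈ IsLocalRing.maximalIdeal O := IsLocalRing.le_maximalIdeal hI hpI
    show r (φ (p : ℤ_[p])) = 0
    rw [map_natCast φ]
    exact Ideal.Quotient.eq_zero_iff_mem.mpr hpm
  have hcongr : ∀ z w : ℤ_[p], ((p : ℤ_[p]) ∣ z - w) → ψ z = ψ w := by
    rintro z w ⟨t, ht⟩
    have hzw : z = w + (p : ℤ_[p]) * t := by rw [← ht]; ring
    rw [hzw, map_add, map_mul, hp0, zero_mul, add_zero]
  have hcoeff : ∀ m : ℕ, m ≠ 0 → r ((PowerSeries.coeff (R := O) m)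
      (1 - PowerSeries.C (R := O) a * PowerSeries.map φ
          (PadicInt.onePlusTPow ((u : ℤ_[p]) * (p : ℤ_[p]) ^ n))
        + PowerSeries.C (R := O) c * PowerSeries.map φ
          (PadicInt.onePlusTPow (2 * (u : ℤ_[p]) * (p : ℤ_[p]) ^ n)))) =
      - (r a * ψ (PadicInt.choose ((u : ℤ_[p]) * (p : ℤ_[p]) ^ n) m))
      + r c * ψ (PadicInt.choose (2 * (u : ℤ_[p]) * (p : ℤ_[p]) ^ n) m) := by
    intro m hm
    rw [map_add, map_sub, PowerSeries.coeff_one, if_neg hm, PowerSeries.coeff_C_mul,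
      PowerSeries.coeff_C_mul, PowerSeries.coeff_map, PowerSeries.coeff_map,
      PadicInt.onePlusTPow, PadicInt.onePlusTPow, PowerSeries.coeff_mk, PowerSeries.coeff_mk]
    simp only [map_add, map_sub, map_mul, map_zero, map_neg]
    rw [hψdef]
    simp only [RingHom.comp_apply]
    ring
  have hppos : p ^ n ≠ 0 := pow_ne_zero n (Fact.out : p.Prime).pos.ne'
  have e1 := hres (1 * p ^ n)
  rw [hcoeff _ (by simpa using hppos)] at e1
  have e2 := hres (2 * p ^ n)
  rw [hcoeff _ (by simpa using hppos)] at e2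
  rw [hcongr _ _ (choose_congr 1 n (u : ℤ_[p])),
      hcongr _ _ (choose_congr 1 n (2 * (u : ℤ_[p]))), choose_one', choose_one'] at e1
  rw [hcongr _ _ (choose_congr 2 n (u : ℤ_[p])),
      hcongr _ _ (choose_congr 2 n (2 * (u : ℤ_[p]))), choose_two_double] at e2
  set A := r a with hA
  set Cc := r c with hCc
  set U := ψ (u : ℤ_[p]) with hU
  set V := ψ (PadicInt.choose (u : ℤ_[p]) 2) with hV
  have hUne : U ≠ 0 := ((u.isUnit).map ψ).ne_zero
  have hCcne : Cc ≠ 0 := (hc.map r).ne_zero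
  have e1' : - (A * U) + Cc * (2 * U) = 0 := by
    rw [← e1, map_mul, map_ofNat]
  have e2' : - (A * V) + Cc * (U * (2 * U - 1)) = 0 := by
    rw [← e2, map_mul, map_sub, map_mul, map_one, map_ofNat]
  have h3 : 2 * V = U * U - U := by
    have h := congrArg ψ (two_mul_choose_two (u : ℤ_[p]))
    rw [map_mul, map_mul, map_sub, map_one, map_ofNat] at h
    linear_combination h
  have hAeq : A = 2 * Cc := by
    refine mul_right_cancel₀ hUne ?_
    linear_combination -e1'
  have hfin : Cc * (U * U) = 0 := by
    linear_combination e2' + V * hAeq + Cc * h3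
  exact (mul_ne_zero hCcne (mul_ne_zero hUne hUne)) hfin
end

section
/- Let Λ = Zp[[Γ]] with Γ = 1 + pZp (p an odd prime), and let A be a complete local domain, finite and flat as a Λ-module. Suppose x ∈ A lies in ℘'A for every classical height one prime ℘' of Λ (i.e. for every kernel of the Zp-algebra map Λ → O sending a topological generator γ to ζγᵏ with ζ a p-power root of unity and k ≥ 2 an integer). Then x = 0. -/
/-- A prime `P` of `Λ = ℤ_p⟦T⟧` is *classical* if it is the kernel of a `ℤ_p`-algebra
map `Λ → O`, where `O` is a domain, free of finite rank over `ℤ_p`, sending the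
topological generator `γ = 1 + p` of `Γ = 1 + pℤ_p` (identified with `1 + T`) to
`ζ·γᵏ` with `ζ` a `p`-power root of unity and `k ≥ 2` an integer. -/
def IsClassicalPrime (p : ℕ) [Fact p.Prime] (P : Ideal (PowerSeries ℤ_[p])) : Prop :=
  ∃ (O : Type) (_ : CommRing O) (_ : IsDomain O) (_ : Algebra ℤ_[p] O)
    (_ : Module.Finite ℤ_[p] O) (φ : PowerSeries ℤ_[p] →ₐ[ℤ_[p]] O)
    (ζ : O) (m k : ℕ), 2 ≤ k ∧ ζ ^ p ^ m = 1 ∧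
      φ (1 + PowerSeries.X) = ζ * algebraMap ℤ_[p] O ((1 + (p : ℤ_[p])) ^ k) ∧
      P = RingHom.ker (φ : PowerSeries ℤ_[p] →+* O)

open PowerSeries Finset Pointwise

namespace IwaAux

variable {p : ℕ} [Fact p.Prime]

/-- Terms of evaluation series are norm-bounded by a geometric series. -/
lemma norm_term_le (a : ℤ_[p]) (u : ℕ → ℤ_[p]) (i : ℕ) : ‖u i * a ^ i‖ ≤ ‖a‖ ^ i := by
  rw [norm_mul, norm_pow]
  exact mul_le_of_le_one_left (pow_nonneg (norm_nonneg a) i) (PadicInt.norm_le_one _)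

lemma summable_norm_term (a : ℤ_[p]) (ha : ‖a‖ < 1) (u : ℕ → ℤ_[p]) :
    Summable fun i => ‖u i * a ^ i‖ :=
  Summable.of_nonneg_of_le (fun _ => norm_nonneg _) (norm_term_le a u)
    (summable_geometric_of_lt_one (norm_nonneg a) ha)

lemma summable_term (a : ℤ_[p]) (ha : ‖a‖ < 1) (u : ℕ → ℤ_[p]) :
    Summable fun i => u i * a ^ i :=
  (summable_norm_term a ha u).of_norm

/-- Evaluation of a power series at a point of norm `< 1`, as a ring homomorphism. -/
noncomputable def evRH (a : ℤ_[p]) (ha : ‖a‖ < 1) : PowerSeries ℤ_[p] →+* ℤ_[p] where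
  toFun f := ∑' n, coeff n f * a ^ n
  map_zero' := by simp
  map_one' := by
    show (∑' n, coeff n (1 : PowerSeries ℤ_[p]) * a ^ n) = 1
    rw [tsum_eq_single 0 (by intro b hb; simp [coeff_one, hb])]
    simp
  map_add' f g := by
    simp only [map_add, add_mul]
    exact Summable.tsum_add (summable_term a ha _) (summable_term a ha _)
  map_mul' f g := by
    beta_reduce
    rw [tsum_mul_tsum_eq_tsum_sum_antidiagonal_of_summable_norm
      (summable_norm_term a ha _) (summable_norm_term a ha _)]
    refine tsum_congr fun n => ?_
    rw [coeff_mul, Finset.sum_mul]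
    refine Finset.sum_congr rfl fun kl hkl => ?_
    have h : kl.1 + kl.2 = n := Finset.HasAntidiagonal.mem_antidiagonal.mp hkl
    rw [← h, pow_add]; ring

lemma evRH_apply (a : ℤ_[p]) (ha : ‖a‖ < 1) (f : PowerSeries ℤ_[p]) :
    evRH a ha f = ∑' n, coeff n f * a ^ n := rfl

lemma evRH_C (a : ℤ_[p]) (ha : ‖a‖ < 1) (c : ℤ_[p]) : evRH a ha (C c) = c := by
  rw [evRH_apply, tsum_eq_single 0 (by intro b hb; simp [coeff_C, hb])]
  simp

lemma evRH_X (a : ℤ_[p]) (ha : ‖a‖ < 1) : evRH a ha X = a := by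
  rw [evRH_apply, tsum_eq_single 1 (by intro b hb; simp [coeff_X, hb])]
  simp

/-- Shift identity for the evaluation series. -/
lemma tsum_shift (a : ℤ_[p]) (ha : ‖a‖ < 1) (f : PowerSeries ℤ_[p]) (c : ℕ) :
    (∑' i, coeff (c + i) f * a ^ i)
      = coeff c f + a * ∑' i, coeff (c + 1 + i) f * a ^ i := by
  rw [Summable.tsum_eq_zero_add (summable_term a ha fun i => coeff (c + i) f)]
  simp only [add_zero, pow_zero, mul_one]
  congr 1
  rw [← Summable.tsum_mul_left a (summable_term a ha fun i => coeff (c + 1 + i) f)]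
  refine tsum_congr fun i => ?_
  rw [show c + (i + 1) = c + 1 + i by omega, pow_succ]
  ring

/-- Division: if `f` vanishes at `a` then `X - C a` divides `f`. -/
lemma dvd_of_ev_eq_zero (a : ℤ_[p]) (ha : ‖a‖ < 1) (f : PowerSeries ℤ_[p])
    (hf : evRH a ha f = 0) : (X - C a) ∣ f := by
  refine ⟨mk fun n => ∑' i, coeff (n + 1 + i) f * a ^ i, ?_⟩
  ext n
  rw [sub_mul, map_sub, coeff_C_mul]
  cases n with
  | zero =>
    rw [coeff_zero_X_mul, coeff_mk]
    have h0 : (∑' i, coeff (0 + i) f * a ^ i) = 0 := by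
      rw [← hf, evRH_apply]
      exact tsum_congr fun i => by rw [zero_add]
    rw [tsum_shift a ha f 0] at h0
    linear_combination h0
  | succ n =>
    rw [coeff_succ_X_mul, coeff_mk, coeff_mk, tsum_shift a ha f (n + 1)]
    ring


lemma ker_evRH (a : ℤ_[p]) (ha : ‖a‖ < 1) :
    RingHom.ker (evRH a ha) = Ideal.span {X - C a} := by
  apply le_antisymm
  · intro f hf
    rw [Ideal.mem_span_singleton]
    exact dvd_of_ev_eq_zero a ha f hf
  · rw [Ideal.span_le, Set.singleton_subset_iff]
    show X - C a ∈ RingHom.ker (evRH a ha)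
    rw [RingHom.mem_ker, map_sub, evRH_X, evRH_C, sub_self]

/-- Evaluation as a `ℤ_p`-algebra homomorphism. -/
noncomputable def evAH (a : ℤ_[p]) (ha : ‖a‖ < 1) : PowerSeries ℤ_[p] →ₐ[ℤ_[p]] ℤ_[p] :=
  { evRH a ha with
    commutes' := fun r => by
      show evRH a ha (algebraMap ℤ_[p] (PowerSeries ℤ_[p]) r) = algebraMap ℤ_[p] ℤ_[p] r
      rw [PowerSeries.algebraMap_apply]
      simp [evRH_C] }

lemma evAH_coe (a : ℤ_[p]) (ha : ‖a‖ < 1) :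
    ((evAH a ha : PowerSeries ℤ_[p] →ₐ[ℤ_[p]] ℤ_[p]) :
      PowerSeries ℤ_[p] →+* ℤ_[p]) = evRH a ha := rfl

/-- The points `(1+p)^k - 1`. -/
noncomputable def pt (p : ℕ) [Fact p.Prime] (k : ℕ) : ℤ_[p] := (1 + (p : ℤ_[p])) ^ k - 1

lemma p_dvd_pt (k : ℕ) : ((p : ℤ_[p])) ∣ pt p k := by
  have h := sub_dvd_pow_sub_pow (1 + (p : ℤ_[p])) 1 k
  simpa [pt] using h

lemma norm_pt_lt (k : ℕ) : ‖(pt p k : ℤ_[p])‖ < 1 := by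
  obtain ⟨c, hc⟩ := p_dvd_pt (p := p) k
  have h1 : (1 : ℝ) < p := by exact_mod_cast (Fact.out : p.Prime).one_lt
  calc ‖(pt p k : ℤ_[p])‖ = ‖(p : ℤ_[p])‖ * ‖c‖ := by rw [hc, norm_mul]
    _ ≤ ‖(p : ℤ_[p])‖ := mul_le_of_le_one_right (norm_nonneg _) (PadicInt.norm_le_one c)
    _ < 1 := by rw [PadicInt.norm_p]; exact inv_lt_one_of_one_lt₀ h1

lemma pt_injective : Function.Injective (pt p) := by
  intro k j h
  have h2 : ((1 + p : ℕ) : ℤ_[p]) ^ k = ((1 + p : ℕ) : ℤ_[p]) ^ j := by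
    have h' : (1 + (p : ℤ_[p])) ^ k - 1 = (1 + (p : ℤ_[p])) ^ j - 1 := h
    push_cast
    linear_combination h'
  have h3 : ((1 + p) ^ k : ℕ) = ((1 + p) ^ j : ℕ) := by exact_mod_cast h2
  exact Nat.pow_right_injective (by have := (Fact.out : p.Prime).two_le; omega) h3

section FlatDiv

variable {R : Type*} [CommRing R] {M : Type*} [AddCommGroup M] [Module R M] [Module.Flat R M]

/-- In a flat module, a relation `α • m₁ = β • m₂` with `β` "prime to" `α`
forces `β ∣ m₁`. -/
theorem flat_div {α β : R} (hcond : ∀ u : R, β ∣ α * u → β ∣ u)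
    {m₁ m₂ : M} (h : α • m₁ = β • m₂) : ∃ t : M, m₁ = β • t := by
  classical
  set I : Ideal R := Ideal.span {α, β} with hI
  have hα : α ∈ I := Ideal.subset_span (by simp)
  have hβ : β ∈ I := Ideal.subset_span (by simp)
  have hfg : I.FG := ⟨{α, β}, by simp [hI]⟩
  have inj := Module.Flat.iff_lift_lsmul_comp_subtype_injective.mp (inferInstance : Module.Flat R M) hfg
  have hz : (⟨α, hα⟩ : I) ⊗ₜ[R] m₁ = (⟨β, hβ⟩ : I) ⊗ₜ[R] m₂ := by
    rw [← sub_eq_zero]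
    apply inj
    rw [map_zero, map_sub, TensorProduct.lift.tmul, TensorProduct.lift.tmul]
    simp only [LinearMap.coe_comp, Function.comp_apply, Submodule.coe_subtype,
      LinearMap.lsmul_apply]
    rw [h, sub_self]
  set Q : Ideal R := Ideal.span ({β} : Set R) with hQ
  set q : R →+* R ⧸ Q := Ideal.Quotient.mk Q with hq
  have key : ∀ u v u' v' : R, u * α + v * β = u' * α + v' * β → q u = q u' := by
    intro u v u' v' huv
    rw [hq, Ideal.Quotient.eq, hQ, Ideal.mem_span_singleton]
    refine hcond _ ⟨v' - v, by linear_combination huv⟩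
  have hrep : ∀ z : I, ∃ uv : R × R, uv.1 * α + uv.2 * β = (z : R) := fun z => by
    obtain ⟨u, v, huv⟩ := Ideal.mem_span_pair.mp z.2
    exact ⟨(u, v), huv⟩
  choose rep hrep using hrep
  let ψ : I →ₗ[R] R ⧸ Q :=
    { toFun := fun z => q (rep z).1
      map_add' := fun z w => by
        show q (rep (z + w)).1 = q (rep z).1 + q (rep w).1
        have h1 := hrep z; have h2 := hrep w; have h3 := hrep (z + w)
        rw [Submodule.coe_add] at h3
        have hkey := key (rep (z + w)).1 (rep (z + w)).2
          ((rep z).1 + (rep w).1) ((rep z).2 + (rep w).2)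
          (by linear_combination h3 - h1 - h2)
        rw [hkey, map_add]
      map_smul' := fun r z => by
        show q (rep (r • z)).1 = r • q (rep z).1
        have h1 := hrep z; have h3 := hrep (r • z)
        have hco : ((r • z : I) : R) = r * (z : R) := rfl
        rw [hco] at h3
        have hkey := key (rep (r • z)).1 (rep (r • z)).2
          (r * (rep z).1) (r * (rep z).2) (by linear_combination h3 - r * h1)
        rw [hkey]
        exact (Submodule.Quotient.mk_smul Q r (rep z).1).symm }
  have happ := congrArg (LinearMap.rTensor M ψ) hz
  rw [LinearMap.rTensor_tmul, LinearMap.rTensor_tmul] at happ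
  have hψα : ψ ⟨α, hα⟩ = q 1 :=
    key (rep ⟨α, hα⟩).1 (rep ⟨α, hα⟩).2 1 0 (by linear_combination hrep ⟨α, hα⟩)
  have hψβ : ψ ⟨β, hβ⟩ = 0 := by
    have h0 : ψ ⟨β, hβ⟩ = q 0 :=
      key (rep ⟨β, hβ⟩).1 (rep ⟨β, hβ⟩).2 0 1 (by linear_combination hrep ⟨β, hβ⟩)
    rw [h0, map_zero]
  rw [hψα, hψβ, TensorProduct.zero_tmul] at happ
  have h5 : (TensorProduct.quotTensorEquivQuotSMul M Q) ((q 1) ⊗ₜ[R] m₁) = 0 := by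
    rw [happ, map_zero]
  rw [TensorProduct.quotTensorEquivQuotSMul_mk_tmul] at h5
  have hmem : m₁ ∈ Q • (⊤ : Submodule R M) := by
    have h6 := (Submodule.Quotient.mk_eq_zero _).mp h5
    simpa using h6
  rw [hQ, Submodule.ideal_span_singleton_smul] at hmem
  obtain ⟨t, -, ht⟩ := Set.mem_smul_set.mp hmem
  exact ⟨t, ht.symm⟩

end FlatDiv

lemma prod_mem_pow_card {R : Type*} [CommRing R] (J : Ideal R) (s : Finset ℕ) (f : ℕ → R)
    (h : ∀ k ∈ s, f k ∈ J) : (∏ k ∈ s, f k) ∈ J ^ s.card := by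
  classical
  induction s using Finset.cons_induction with
  | empty => simp
  | cons a s ha ih =>
    rw [Finset.prod_cons, Finset.card_cons, pow_succ, mul_comm (J ^ s.card) J]
    exact Ideal.mul_mem_mul (h a (Finset.mem_cons_self a s))
      (ih fun k hk => h k (Finset.mem_cons_of_mem hk))

end IwaAux


/-- Let `p` be odd, `Λ = ℤ_p⟦Γ⟧ ≅ ℤ_p⟦T⟧` and `A` a complete local domain, finite and
flat as a `Λ`-module.  If `x ∈ A` lies in `℘'A` for every classical height one prime
`℘'` of `Λ`, then `x = 0`. -/
theorem eq_zero_of_mem_all_classical_primes {p : ℕ} [Fact p.Prime] (hp : Odd p)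
    {A : Type*} [CommRing A] [IsDomain A] [IsLocalRing A]
    [IsAdicComplete (IsLocalRing.maximalIdeal A) A]
    [Algebra (PowerSeries ℤ_[p]) A] [Module.Finite (PowerSeries ℤ_[p]) A]
    [Module.Flat (PowerSeries ℤ_[p]) A]
    (x : A)
    (hx : ∀ P : Ideal (PowerSeries ℤ_[p]), IsClassicalPrime p P →
      x ∈ Ideal.map (algebraMap (PowerSeries ℤ_[p]) A) P) :
    x = 0 := by
  classical
  open IwaAux in
  set f : ℕ → PowerSeries ℤ_[p] := fun k => X - C (pt p k) with hfdef
  -- `x` is divisible by each `f k`, `k ≥ 2`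
  have hdvd : ∀ k, 2 ≤ k → (algebraMap (PowerSeries ℤ_[p]) A) (f k) ∣ x := by
    intro k hk
    have hcl : IsClassicalPrime p (RingHom.ker (evRH (pt p k) (norm_pt_lt k))) := by
      refine ⟨ℤ_[p], inferInstance, inferInstance, inferInstance, inferInstance,
        evAH (pt p k) (norm_pt_lt k), 1, 0, k, hk, by simp, ?_, by rw [evAH_coe]⟩
      show evRH (pt p k) (norm_pt_lt k) (1 + X)
        = 1 * algebraMap ℤ_[p] ℤ_[p] ((1 + (p : ℤ_[p])) ^ k)
      rw [map_add, map_one, evRH_X, one_mul]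
      simp [pt]
    have hmem := hx _ hcl
    rw [ker_evRH, Ideal.map_span, Set.image_singleton, Ideal.mem_span_singleton] at hmem
    exact hmem
  have hne : ∀ k, f k ≠ 0 := by
    intro k h
    have h1 := congrArg (coeff 1) h
    simp [hfdef, coeff_C] at h1
  have hprime : ∀ k, Prime (f k) := by
    intro k
    have h1 : (RingHom.ker (evRH (pt p k) (norm_pt_lt k))).IsPrime := RingHom.ker_isPrime _
    rw [ker_evRH] at h1
    exact (Ideal.span_singleton_prime (hne k)).mp h1
  have hev : ∀ k j, evRH (pt p k) (norm_pt_lt k) (f j) = pt p k - pt p j := by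
    intro k j
    rw [hfdef]
    simp only [map_sub, evRH_X, evRH_C]
  -- main induction: x is divisible by ∏_{k=2}^{N+2} f k
  have main : ∀ N : ℕ, ∃ y : A,
      x = (algebraMap (PowerSeries ℤ_[p]) A) (∏ k ∈ Finset.Icc 2 (N + 2), f k) * y := by
    intro N
    induction N with
    | zero =>
      obtain ⟨y, hy⟩ := hdvd 2 le_rfl
      exact ⟨y, by simpa using hy⟩
    | succ N ih =>
      obtain ⟨y, hy⟩ := ih
      obtain ⟨y', hy'⟩ := hdvd (N + 3) (by omega)
      set g := ∏ k ∈ Finset.Icc 2 (N + 2), f k with hg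
      have hcond : ∀ u, f (N + 3) ∣ g * u → f (N + 3) ∣ u := by
        intro u hu
        rcases (hprime (N + 3)).2.2 _ _ hu with hcase | hcase
        · exfalso
          have hker : evRH (pt p (N + 3)) (norm_pt_lt (N + 3)) g = 0 := by
            have : g ∈ RingHom.ker (evRH (pt p (N + 3)) (norm_pt_lt (N + 3))) := by
              rw [ker_evRH, Ideal.mem_span_singleton]; exact hcase
            rwa [RingHom.mem_ker] at this
          rw [hg, map_prod] at hker
          obtain ⟨k, hk, h0⟩ := Finset.prod_eq_zero_iff.mp hker
          rw [hev] at h0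
          have heq : pt p (N + 3) = pt p k := by linear_combination h0
          have := pt_injective heq
          have hk2 := Finset.mem_Icc.mp hk
          omega
        · exact hcase
      have hsm : g • y = f (N + 3) • y' := by
        rw [Algebra.smul_def, Algebra.smul_def, ← hy, ← hy']
      obtain ⟨t, ht⟩ := flat_div hcond hsm
      refine ⟨t, ?_⟩
      rw [show N + 1 + 2 = (N + 2) + 1 from rfl,
        Finset.prod_Icc_succ_top (by omega : 2 ≤ (N + 2) + 1), ← hg, map_mul, hy, ht,
        Algebra.smul_def]
      ring
  -- the ideal (p, X) of Λ
  set J : Ideal (PowerSeries ℤ_[p]) := Ideal.span {C (p : ℤ_[p]), X} with hJ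
  have hfJ : ∀ k, f k ∈ J := by
    intro k
    obtain ⟨c, hc⟩ := p_dvd_pt (p := p) k
    have hX : (X : PowerSeries ℤ_[p]) ∈ J := Ideal.subset_span (by simp)
    have hp' : C (p : ℤ_[p]) ∈ J := Ideal.subset_span (by simp)
    have h1 : f k = X - C (p : ℤ_[p]) * C c := by
      rw [hfdef]; simp only [hc, map_mul]
    rw [h1]
    exact sub_mem hX (Ideal.mul_mem_right _ _ hp')
  -- J is contained in the maximal ideal of Λ
  have hJle : J ≤ IsLocalRing.maximalIdeal (PowerSeries ℤ_[p]) := by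
    rw [hJ, Ideal.span_le]
    intro y hy
    simp only [Set.mem_insert_iff, Set.mem_singleton_iff] at hy
    rcases hy with rfl | rfl
    · rw [SetLike.mem_coe, IsLocalRing.mem_maximalIdeal]
      intro hu
      have h2 : IsUnit ((p : ℤ_[p])) := by
        have := hu.map (constantCoeff)
        rwa [constantCoeff_C] at this
      rw [PadicInt.isUnit_iff, PadicInt.norm_p] at h2
      have h1 : (1 : ℝ) < p := by exact_mod_cast (Fact.out : p.Prime).one_lt
      have := inv_lt_one_of_one_lt₀ h1
      rw [h2] at this
      exact lt_irrefl _ this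
    · rw [SetLike.mem_coe, IsLocalRing.mem_maximalIdeal]
      intro hu
      have h2 : IsUnit ((0 : ℤ_[p])) := by
        have := hu.map (constantCoeff)
        rwa [constantCoeff_X] at this
      exact (zero_ne_one (α := ℤ_[p])) (isUnit_zero_iff.mp h2)
  -- the image of J in A is proper, hence contained in the maximal ideal of A
  have hKne : Ideal.map (algebraMap (PowerSeries ℤ_[p]) A) J ≠ ⊤ := by
    intro htop
    have h1 : (⊤ : Submodule (PowerSeries ℤ_[p]) A) ≤ J • ⊤ := by
      rw [Ideal.smul_top_eq_map, htop]
      intro z _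
      exact Submodule.mem_top
    have h2 := Submodule.eq_bot_of_le_smul_of_le_jacobson_bot J ⊤
      (Module.finite_def.mp (inferInstance : Module.Finite (PowerSeries ℤ_[p]) A)) h1
      (by rw [IsLocalRing.jacobson_eq_maximalIdeal (⊥ : Ideal (PowerSeries ℤ_[p])) bot_ne_top]
          exact hJle)
    have h3 : (1 : A) ∈ (⊥ : Submodule (PowerSeries ℤ_[p]) A) := h2 ▸ Submodule.mem_top
    rw [Submodule.mem_bot] at h3
    exact one_ne_zero h3
  have hKle := IsLocalRing.le_maximalIdeal hKne
  -- x lies in every power of the maximal ideal of A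
  have hmA : ∀ n, x ∈ (IsLocalRing.maximalIdeal A) ^ n := by
    intro n
    obtain ⟨y, hy⟩ := main n
    have hcard : (Finset.Icc 2 (n + 2)).card = n + 1 := by
      rw [Nat.card_Icc]; omega
    have h1 : (∏ k ∈ Finset.Icc 2 (n + 2), f k) ∈ J ^ (n + 1) := by
      rw [← hcard]
      exact prod_mem_pow_card J _ f fun k _ => hfJ k
    have h2 : x ∈ Ideal.map (algebraMap (PowerSeries ℤ_[p]) A) (J ^ (n + 1)) := by
      rw [hy]
      exact Ideal.mul_mem_right _ _ (Ideal.mem_map_of_mem _ h1)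
    rw [Ideal.map_pow] at h2
    have h3 : x ∈ (IsLocalRing.maximalIdeal A) ^ (n + 1) :=
      Ideal.pow_right_mono hKle (n + 1) h2
    exact Ideal.pow_le_pow_right (by omega) h3
  -- conclude by Hausdorffness
  refine IsHausdorff.haus (IsAdicComplete.toIsHausdorff
    (I := IsLocalRing.maximalIdeal A) (M := A)) x fun n => ?_
  rw [SModEq.zero]
  have := hmA n
  rw [smul_eq_mul, Ideal.mul_top]
  exact this
end

section
/- Let R be a discrete valuation ring with maximal ideal ℘ and fraction field F, let L be a free R-module of rank 2 with an action of a group G, and set V = L ⊗_R F, W = L/℘L. If dim_F (V_G) = dim_{R/℘} (W_G) = d (coinvariants), then the coinvariant module L_G is a free R-module of rank d, and the natural maps L_G ⊗_R F → V_G and L_G/℘L_G → W_G are isomorphisms. -/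
open scoped TensorProduct

/-- The submodule of `L` generated by the elements `g·m − m`; the quotient by it is the
module of `G`-coinvariants `L_G`. -/
def coinvSubmodule (R : Type*) {L G : Type*} [CommRing R] [AddCommGroup L] [Module R L]
    [Group G] (ρ : G →* (L ≃ₗ[R] L)) : Submodule R L :=
  Submodule.span R {x | ∃ (g : G) (m : L), x = ρ g m - m}

/-- The coinvariants submodule of the base change `A₀ ⊗_R L` (for the base-changed
`G`-action). -/
def coinvBaseChange (R A₀ : Type*) {L G : Type*} [CommRing R] [CommRing A₀] [Algebra R A₀]
    [AddCommGroup L] [Module R L] [Group G] (ρ : G →* (L ≃ₗ[R] L)) :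
    Submodule A₀ (A₀ ⊗[R] L) :=
  Submodule.span A₀ {x | ∃ (g : G) (v : A₀ ⊗[R] L),
    x = LinearMap.baseChange A₀ (↑(ρ g) : L →ₗ[R] L) v - v}

/-- The natural base-change map `A₀ ⊗_R (L_G) → (A₀ ⊗_R L)_G`. -/
noncomputable def coinvNaturalBaseChangeMap (R A₀ : Type*) {L G : Type*} [CommRing R]
    [CommRing A₀] [Algebra R A₀] [AddCommGroup L] [Module R L] [Group G]
    (ρ : G →* (L ≃ₗ[R] L)) :
    (A₀ ⊗[R] (L ⧸ coinvSubmodule R ρ)) →ₗ[A₀] ((A₀ ⊗[R] L) ⧸ coinvBaseChange R A₀ ρ) :=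
  LinearMap.liftBaseChange A₀
    (Submodule.liftQ (coinvSubmodule R ρ)
      (((coinvBaseChange R A₀ ρ).mkQ.restrictScalars R).comp ((TensorProduct.mk R A₀ L) 1))
      (by
        rw [coinvSubmodule, Submodule.span_le]
        rintro x ⟨g, m, rfl⟩
        have hmem : ((1 : A₀) ⊗ₜ[R] (ρ g m) - (1 : A₀) ⊗ₜ[R] m) ∈ coinvBaseChange R A₀ ρ :=
          Submodule.subset_span ⟨g, (1 : A₀) ⊗ₜ[R] m, by simp [LinearMap.baseChange_tmul]⟩
        simp only [SetLike.mem_coe, LinearMap.mem_ker, LinearMap.comp_apply,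
          LinearMap.restrictScalars_apply, TensorProduct.mk_apply, TensorProduct.tmul_sub,
          Submodule.mkQ_apply]
        exact (Submodule.Quotient.mk_eq_zero _).2 hmem))

section AuxBijective

variable {R A₀ L G : Type*} [CommRing R] [CommRing A₀] [Algebra R A₀]
  [AddCommGroup L] [Module R L] [Group G] (ρ : G →* (L ≃ₗ[R] L))

lemma coinv_mkQ_comp_rho (g : G) :
    (coinvSubmodule R ρ).mkQ ∘ₗ (↑(ρ g) : L →ₗ[R] L) = (coinvSubmodule R ρ).mkQ := by
  ext m
  simp only [LinearMap.comp_apply, Submodule.mkQ_apply]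
  rw [Submodule.Quotient.eq]
  exact Submodule.subset_span ⟨g, m, rfl⟩

lemma coinvBaseChange_le_ker :
    coinvBaseChange R A₀ ρ ≤
      LinearMap.ker (LinearMap.baseChange A₀ (coinvSubmodule R ρ).mkQ) := by
  rw [coinvBaseChange, Submodule.span_le]
  rintro x ⟨g, v, rfl⟩
  simp only [SetLike.mem_coe, LinearMap.mem_ker, map_sub, sub_eq_zero]
  rw [← LinearMap.comp_apply, ← LinearMap.baseChange_comp, coinv_mkQ_comp_rho]

/-- The inverse of the natural base-change map. -/
noncomputable def coinvInverseMap :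
    ((A₀ ⊗[R] L) ⧸ coinvBaseChange R A₀ ρ) →ₗ[A₀] (A₀ ⊗[R] (L ⧸ coinvSubmodule R ρ)) :=
  Submodule.liftQ _ (LinearMap.baseChange A₀ (coinvSubmodule R ρ).mkQ)
    (coinvBaseChange_le_ker ρ)

lemma coinvNaturalBaseChangeMap_tmul (a : A₀) (m : L) :
    coinvNaturalBaseChangeMap R A₀ ρ (a ⊗ₜ[R] Submodule.Quotient.mk m) =
      Submodule.Quotient.mk (a ⊗ₜ[R] m) := by
  have h1 : coinvNaturalBaseChangeMap R A₀ ρ (a ⊗ₜ[R] Submodule.Quotient.mk m)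
      = a • Submodule.Quotient.mk (p := coinvBaseChange R A₀ ρ) ((1 : A₀) ⊗ₜ[R] m) := by
    rw [coinvNaturalBaseChangeMap, LinearMap.liftBaseChange_tmul]
    rfl
  rw [h1, ← Submodule.Quotient.mk_smul]
  congr 1
  rw [TensorProduct.smul_tmul', smul_eq_mul, mul_one]

lemma coinvInverseMap_mk (w : A₀ ⊗[R] L) :
    coinvInverseMap ρ (Submodule.Quotient.mk w) =
      LinearMap.baseChange A₀ (coinvSubmodule R ρ).mkQ w :=
  rfl

lemma coinvNaturalBaseChangeMap_bijective :
    Function.Bijective (coinvNaturalBaseChangeMap R A₀ ρ) := by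
  constructor
  · have h : ∀ z, coinvInverseMap ρ (coinvNaturalBaseChangeMap R A₀ ρ z) = z := by
      intro z
      induction z using TensorProduct.induction_on with
      | zero => simp
      | tmul a q =>
        obtain ⟨m, rfl⟩ := Submodule.Quotient.mk_surjective _ q
        rw [coinvNaturalBaseChangeMap_tmul, coinvInverseMap_mk, LinearMap.baseChange_tmul]
        rfl
      | add x y hx hy => rw [map_add, map_add, hx, hy]
    exact Function.LeftInverse.injective h
  · intro z
    obtain ⟨w, rfl⟩ := Submodule.Quotient.mk_surjective _ z
    induction w using TensorProduct.induction_on with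
    | zero => exact ⟨0, by simp⟩
    | tmul a m =>
      exact ⟨a ⊗ₜ[R] Submodule.Quotient.mk m, coinvNaturalBaseChangeMap_tmul ρ a m⟩
    | add x y hx hy =>
      obtain ⟨u, hu⟩ := hx
      obtain ⟨v, hv⟩ := hy
      refine ⟨u + v, ?_⟩
      rw [map_add, hu, hv, ← Submodule.Quotient.mk_add]

end AuxBijective

set_option maxHeartbeats 1000000

/-- Let `R` be a discrete valuation ring with maximal ideal `℘ = (π)` and fraction field
`F`, `L` a free `R`-module of rank `2` with an action of a group `G`, and set
`V = L ⊗_R F` and `W = L/℘L (= (R/℘) ⊗_R L)`.  If the spaces of coinvariants `V_G` and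
`W_G` both have dimension `d`, then `L_G` is a free `R`-module of rank `d` and the
natural maps `L_G ⊗_R F → V_G` and `L_G/℘L_G → W_G` are isomorphisms. -/
theorem coinv_free_of_generic_and_special_rank {R L G : Type*} [CommRing R] [IsDomain R]
    [IsDiscreteValuationRing R] [AddCommGroup L] [Module R L] [Module.Free R L]
    (hrk : Module.finrank R L = 2) [Group G] (ρ : G →* (L ≃ₗ[R] L))
    (π : R) (hπ : Irreducible π) (d : ℕ)
    (hV : Module.finrank (FractionRing R)
        ((FractionRing R ⊗[R] L) ⧸ coinvBaseChange R (FractionRing R) ρ) = d)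
    (hW : Module.finrank (R ⧸ Ideal.span {π})
        (((R ⧸ Ideal.span {π}) ⊗[R] L) ⧸ coinvBaseChange R (R ⧸ Ideal.span {π}) ρ) = d) :
    Module.Free R (L ⧸ coinvSubmodule R ρ) ∧
    Module.finrank R (L ⧸ coinvSubmodule R ρ) = d ∧
    Function.Bijective (coinvNaturalBaseChangeMap R (FractionRing R) ρ) ∧
    Function.Bijective (coinvNaturalBaseChangeMap R (R ⧸ Ideal.span {π}) ρ) := by
  classical
  haveI hmax : (Ideal.span {π}).IsMaximal :=
    PrincipalIdealRing.isMaximal_of_irreducible hπ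
  letI : Field (R ⧸ Ideal.span {π}) := Ideal.Quotient.field _
  -- `L` is a finite `R`-module
  haveI : Module.Finite R L :=
    Module.finite_of_rank_eq_nat ((Cardinal.toNat_eq_iff (two_ne_zero)).mp hrk)
  haveI : Module.Finite R (L ⧸ coinvSubmodule R ρ) :=
    Module.Finite.of_surjective (coinvSubmodule R ρ).mkQ (Submodule.mkQ_surjective _)
  -- the natural base-change maps are bijective
  have hbF := coinvNaturalBaseChangeMap_bijective (A₀ := FractionRing R) ρ
  have hbk := coinvNaturalBaseChangeMap_bijective (A₀ := R ⧸ Ideal.span {π}) ρ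
  let eF := LinearEquiv.ofBijective _ hbF
  let ek := LinearEquiv.ofBijective _ hbk
  -- dimensions of the base-changed coinvariants
  have hVF : Module.finrank (FractionRing R)
      (FractionRing R ⊗[R] (L ⧸ coinvSubmodule R ρ)) = d := by
    rw [eF.finrank_eq, hV]
  have hWk : Module.finrank (R ⧸ Ideal.span {π})
      ((R ⧸ Ideal.span {π}) ⊗[R] (L ⧸ coinvSubmodule R ρ)) = d := by
    rw [ek.finrank_eq, hW]
  -- pick a basis of `k ⊗ L_G` and lift it to `L_G`
  let b : Module.Basis (Fin d) (R ⧸ Ideal.span {π})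
      ((R ⧸ Ideal.span {π}) ⊗[R] (L ⧸ coinvSubmodule R ρ)) :=
    Module.finBasisOfFinrankEq _ _ hWk
  choose f hf using fun i =>
    TensorProduct.mk_surjective R (L ⧸ coinvSubmodule R ρ) (R ⧸ Ideal.span {π})
      Ideal.Quotient.mk_surjective (b i)
  -- Nakayama: `f` generates `L_G`
  have hsp : Submodule.span R
      (Set.range fun i : Fin d => (1 : R ⧸ Ideal.span {π}) ⊗ₜ[R] f i) = ⊤ := by
    have hfb : (fun i : Fin d => (1 : R ⧸ Ideal.span {π}) ⊗ₜ[R] f i) = fun i => b i :=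
      funext hf
    rw [hfb, ← Submodule.restrictScalars_span R (R ⧸ Ideal.span {π})
      Ideal.Quotient.mk_surjective]
    have : Submodule.span (R ⧸ Ideal.span {π}) (Set.range fun i => b i) = ⊤ := b.span_eq
    rw [this]
    rfl
  have hspan_top : Submodule.span R (Set.range f) = ⊤ := by
    set I : Ideal R := Ideal.span {π} with hI
    set q := TensorProduct.quotTensorEquivQuotSMul (L ⧸ coinvSubmodule R ρ) I
    have he : ∀ i : Fin d, q ((1 : R ⧸ I) ⊗ₜ[R] f i) =
        Submodule.Quotient.mk (p := I • (⊤ : Submodule R (L ⧸ coinvSubmodule R ρ)))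
          (f i) := by
      intro i
      have h1 : ((1 : R ⧸ I)) = Ideal.Quotient.mk I 1 := rfl
      rw [h1, TensorProduct.quotTensorEquivQuotSMul_mk_tmul, one_smul]
    have hmap := congrArg (Submodule.map q.toLinearMap) hsp
    rw [Submodule.map_span, Submodule.map_top, LinearEquiv.range,
      ← Set.range_comp] at hmap
    have hcomp : (⇑q.toLinearMap ∘ fun i : Fin d => (1 : R ⧸ I) ⊗ₜ[R] f i)
        = fun i => Submodule.Quotient.mk (p := I • (⊤ : Submodule R (L ⧸ coinvSubmodule R ρ)))
          (f i) := funext fun i => he i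
    rw [hcomp] at hmap
    -- hence the image of `span R (range f)` in the quotient is everything
    have hmap' : Submodule.map (I • (⊤ : Submodule R (L ⧸ coinvSubmodule R ρ))).mkQ
        (Submodule.span R (Set.range f)) = ⊤ := by
      rw [Submodule.map_span, ← Set.range_comp]
      exact hmap
    have hsup := congrArg
      (Submodule.comap (I • (⊤ : Submodule R (L ⧸ coinvSubmodule R ρ))).mkQ) hmap'
    rw [Submodule.comap_map_mkQ, Submodule.comap_top] at hsup
    refine eq_top_iff.mpr ?_
    refine Submodule.le_of_le_smul_of_le_jacobson_bot (I := I) Module.Finite.fg_top ?_ ?_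
    · rw [IsLocalRing.jacobson_eq_maximalIdeal ⊥ bot_ne_top]
      exact IsLocalRing.le_maximalIdeal hmax.ne_top
    · rw [sup_comm] at hsup
      exact hsup.ge
  -- the induced surjection `R^d → L_G`
  let φ : (Fin d → R) →ₗ[R] (L ⧸ coinvSubmodule R ρ) := Fintype.linearCombination R f
  have hφsurj : Function.Surjective φ := by
    rw [← LinearMap.range_eq_top, Fintype.range_linearCombination, hspan_top]
  -- it is injective: base change to the fraction field
  have hdim1 : Module.finrank (FractionRing R) (FractionRing R ⊗[R] (Fin d → R)) = d := by
    rw [(TensorProduct.piScalarRight R (FractionRing R) (FractionRing R) (Fin d)).finrank_eq,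
      Module.finrank_fin_fun]
  set φF := LinearMap.baseChange (FractionRing R) φ with hφF
  have hφFsurj : Function.Surjective φF := by
    intro z
    induction z using TensorProduct.induction_on with
    | zero => exact ⟨0, map_zero _⟩
    | tmul a m =>
      obtain ⟨x, hx⟩ := hφsurj m
      exact ⟨a ⊗ₜ[R] x, by rw [hφF, LinearMap.baseChange_tmul, hx]⟩
    | add x y hx hy =>
      obtain ⟨u, hu⟩ := hx
      obtain ⟨v, hv⟩ := hy
      exact ⟨u + v, by rw [map_add, hu, hv]⟩
  have hker : LinearMap.ker φF = ⊥ := by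
    have hrn := φF.finrank_range_add_finrank_ker
    rw [LinearMap.range_eq_top.mpr hφFsurj, finrank_top, hVF, hdim1] at hrn
    have h0 : Module.finrank (FractionRing R) (LinearMap.ker φF) = 0 := by omega
    exact Submodule.finrank_eq_zero.mp h0
  have hφinj : Function.Injective φ := by
    rw [← LinearMap.ker_eq_bot, eq_bot_iff]
    intro x hx
    have h0 : φF ((1 : FractionRing R) ⊗ₜ[R] x) = 0 := by
      rw [hφF, LinearMap.baseChange_tmul, LinearMap.mem_ker.mp hx, TensorProduct.tmul_zero]
    have h1 : (1 : FractionRing R) ⊗ₜ[R] x = 0 := by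
      have := hker ▸ LinearMap.mem_ker.mpr h0
      simpa using this
    have h2 := congrArg (TensorProduct.piScalarRightHom R (FractionRing R)
      (FractionRing R) (Fin d)) h1
    rw [TensorProduct.piScalarRightHom_tmul, map_zero] at h2
    have h3 : x = 0 := by
      funext j
      have h4 := congrFun h2 j
      simp only [Pi.zero_apply] at h4
      have h5 : algebraMap R (FractionRing R) (x j) = 0 := by
        rw [Algebra.algebraMap_eq_smul_one, h4]
      exact IsFractionRing.injective R (FractionRing R) (by simp [h5])
    simp [h3]
  let eφ := LinearEquiv.ofBijective φ ⟨hφinj, hφsurj⟩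
  refine ⟨Module.Free.of_equiv eφ, ?_, hbF, hbk⟩
  rw [← eφ.finrank_eq, Module.finrank_fin_fun]
end
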